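/- Define c : ℕ × ℕ → ℚ by: c(a,0) = #{(m,n) ∈ ℕ² : 2m+3n = a}; for b ≥ 1, c(a,b) = (2ab - b - 3b² + 2)/2 if a ≥ 3b, and c(a,b) = c(a,b-1) if a < 3b. Then in ℚ[[s,t]] one has (∑_{a,b≥0} c(a,b) s^b t^a)·(1-t²)(1-t³)(1-s)(1-st³) = 1 + 2st⁴ + 2st⁵ + s²t⁹. -/

import Mathlib

/-- `dimc a b` encodes `dim H⁰(Y, O(aF + bS))`:
for `b = 0` it counts representations `a = 2m + 3n`; for `b ≥ 1` it is the
Riemann–Roch value `(2ab - b - 3b² + 2)/2` when `a ≥ 3b`, and `dimc a (b-1)` when `a < 3b`. -/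
noncomputable def dimc : ℕ → ℕ → ℚ
  | a, 0 => (Nat.card {p : ℕ × ℕ // 2 * p.1 + 3 * p.2 = a} : ℚ)
  | a, b + 1 =>
      if 3 * (b + 1) ≤ a then
        (2 * (a : ℚ) * (b + 1) - (b + 1) - 3 * ((b : ℚ) + 1) ^ 2 + 2) / 2
      else dimc a b

/-- The double generating series `∑_{a,b} dimc a b · s^b t^a`,
where `s = X 0` and `t = X 1`. -/
noncomputable def dimSeries : MvPowerSeries (Fin 2) ℚ := fun e => dimc (e 1) (e 0)

def Ncl (a : ℕ) : ℕ := if a % 2 ≤ a / 3 then (a / 3 - a % 2) / 2 + 1 else 0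

noncomputable def Pq (a k : ℕ) : ℚ := (2 * (a : ℚ) * k - k - 3 * (k : ℚ) ^ 2 + 2) / 2

lemma aux_one (a : ℕ) (hc : ¬ a % 2 ≤ a / 3) : a = 1 := by omega

lemma card_sol (a : ℕ) : Nat.card {p : ℕ × ℕ // 2 * p.1 + 3 * p.2 = a} = Ncl a := by
  have e : {p : ℕ × ℕ // 2 * p.1 + 3 * p.2 = a} ≃ Fin (Ncl a) :=
    { toFun := fun p => ⟨p.1.2 / 2, by
        have h := p.2
        unfold Ncl; split
        · have h1 : p.1.2 % 2 = a % 2 := by omega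
          have h2 : p.1.2 ≤ a / 3 := by omega
          omega
        · exfalso
          have ha : a = 1 := aux_one a (by assumption)
          omega⟩
      invFun := fun i => ⟨((a - 3 * (a % 2 + 2 * i)) / 2, a % 2 + 2 * i), by
        have hi := i.2
        unfold Ncl at hi
        split at hi
        · have h1 : a % 2 + 2 * (i : ℕ) ≤ a / 3 := by omega
          have h2 : 3 * (a % 2 + 2 * (i : ℕ)) ≤ a := by omega
          have h3 : (a - 3 * (a % 2 + 2 * (i : ℕ))) % 2 = 0 := by omega
          omega
        · omega⟩
      left_inv := fun p => by
        obtain ⟨⟨m, n⟩, h⟩ := p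
        simp only [Subtype.mk.injEq, Prod.mk.injEq]
        have h1 : n % 2 = a % 2 := by omega
        constructor <;> omega
      right_inv := fun i => by
        apply Fin.ext
        simp only
        omega }
  rw [Nat.card_congr e, Nat.card_eq_fintype_card, Fintype.card_fin]

lemma dimc_eval (x y : ℕ) :
    dimc x y = if x < 3 ∨ y = 0 then (Ncl x : ℚ) else Pq x (min y (x / 3)) := by
  induction y with
  | zero => simp [dimc, card_sol]
  | succ y ih =>
    show (if 3 * (y + 1) ≤ x then
        (2 * (x : ℚ) * (y + 1) - (y + 1) - 3 * ((y : ℚ) + 1) ^ 2 + 2) / 2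
      else dimc x y) = _
    by_cases h : 3 * (y + 1) ≤ x
    · rw [if_pos h, if_neg (by omega)]
      rw [show min (y+1) (x/3) = y + 1 by omega]
      unfold Pq; push_cast; ring
    · rw [if_neg h, ih]
      by_cases hx : x < 3
      · rw [if_pos (Or.inl hx), if_pos (Or.inl hx)]
      · rw [if_neg (by omega), if_neg (by omega)]
        rw [show min y (x/3) = min (y+1) (x/3) by omega]

lemma dimc_step (x y : ℕ) (h1 : 1 ≤ y) (h : x < 3 * y) : dimc x y = dimc x (y - 1) := by
  obtain ⟨y, rfl⟩ : ∃ y', y = y' + 1 := ⟨y - 1, by omega⟩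
  show (if 3 * (y + 1) ≤ x then _ else dimc x y) = _
  rw [if_neg (by omega)]; rfl

lemma dimc_min_y (x y : ℕ) (h1 : 1 ≤ y) (h : 3 * y ≤ x) : dimc x y = Pq x y := by
  rw [dimc_eval, if_neg (by omega), show min y (x/3) = y by omega]

lemma dimc_clamp (x y k : ℕ) (h1 : 1 ≤ k) (hky : k ≤ y) (h3 : 3 * k ≤ x) (h4 : x < 3 * k + 3) :
    dimc x y = Pq x k := by
  rw [dimc_eval, if_neg (by omega), show min y (x/3) = k by omega]

set_option maxHeartbeats 2000000 in
lemma key (b a : ℕ) :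
    dimc a b
      - (if 2 ≤ a then dimc (a-2) b else 0)
      - (if 3 ≤ a then dimc (a-3) b else 0)
      + (if 5 ≤ a then dimc (a-5) b else 0)
      - (if 1 ≤ b then dimc a (b-1) else 0)
      + (if 1 ≤ b ∧ 2 ≤ a then dimc (a-2) (b-1) else 0)
      + (if 1 ≤ b ∧ 6 ≤ a then dimc (a-6) (b-1) else 0)
      - (if 1 ≤ b ∧ 8 ≤ a then dimc (a-8) (b-1) else 0)
      + (if 2 ≤ b ∧ 3 ≤ a then dimc (a-3) (b-2) else 0)
      - (if 2 ≤ b ∧ 5 ≤ a then dimc (a-5) (b-2) else 0)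
      - (if 2 ≤ b ∧ 6 ≤ a then dimc (a-6) (b-2) else 0)
      + (if 2 ≤ b ∧ 8 ≤ a then dimc (a-8) (b-2) else 0)
    = (if b = 0 ∧ a = 0 then 1 else 0) + (if b = 1 ∧ a = 4 then 2 else 0)
      + (if b = 1 ∧ a = 5 then 2 else 0) + (if b = 2 ∧ a = 9 then 1 else 0) := by
  by_cases hb0 : b = 0
  · subst hb0
    simp only [show ¬(1:ℕ) ≤ 0 by omega, show ¬(2:ℕ) ≤ 0 by omega, false_and, if_false,
      eq_self_iff_true, true_and, show (0:ℕ) ≠ 1 by omega, show (0:ℕ) ≠ 2 by omega,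
      sub_zero, add_zero]
    rcases le_or_gt a 6 with h | h
    · interval_cases a <;> norm_num [dimc_eval, Ncl]
    · rw [if_neg (show ¬(a = 0) by omega), if_pos (show 2 ≤ a by omega),
        if_pos (show 3 ≤ a by omega), if_pos (show 5 ≤ a by omega)]
      rw [dimc_eval a 0, dimc_eval (a-2) 0, dimc_eval (a-3) 0, dimc_eval (a-5) 0,
        if_pos (Or.inr rfl), if_pos (Or.inr rfl), if_pos (Or.inr rfl), if_pos (Or.inr rfl)]
      have hN : Ncl a + Ncl (a-5) = Ncl (a-2) + Ncl (a-3) := by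
        obtain ⟨q, r, hr, rfl⟩ : ∃ q r, r < 6 ∧ a = 6*q+r :=
          ⟨a/6, a%6, by omega, by omega⟩
        unfold Ncl
        interval_cases r <;> split_ifs <;> omega
      have hN' : (Ncl a : ℚ) + Ncl (a-5) = Ncl (a-2) + Ncl (a-3) := by exact_mod_cast hN
      linarith
  by_cases hb1 : b = 1
  · subst hb1
    simp only [show (1:ℕ) ≤ 1 by omega, show ¬(2:ℕ) ≤ 1 by omega, false_and, if_false,
      true_and, if_true, show (1:ℕ) ≠ 0 by omega, show (1:ℕ) ≠ 2 by omega,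
      show (1:ℕ) - 1 = 0 from rfl, sub_zero, add_zero]
    rcases le_or_gt a 12 with h | h
    · interval_cases a <;> norm_num [dimc_eval, Ncl, Pq]
    · simp only [show 2 ≤ a by omega, show 3 ≤ a by omega, show 5 ≤ a by omega,
        show 6 ≤ a by omega, show 8 ≤ a by omega, if_true,
        show a ≠ 4 by omega, show a ≠ 5 by omega, if_false, add_zero]
      rw [dimc_min_y a 1 (by omega) (by omega), dimc_min_y (a-2) 1 (by omega) (by omega),
        dimc_min_y (a-3) 1 (by omega) (by omega), dimc_min_y (a-5) 1 (by omega) (by omega),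
        dimc_eval a 0, dimc_eval (a-2) 0, dimc_eval (a-6) 0, dimc_eval (a-8) 0,
        if_pos (Or.inr rfl), if_pos (Or.inr rfl), if_pos (Or.inr rfl), if_pos (Or.inr rfl)]
      have hN : Ncl (a-2) + Ncl (a-6) = Ncl a + Ncl (a-8) := by
        obtain ⟨q, r, hr, rfl⟩ : ∃ q r, r < 6 ∧ a = 6*q+r :=
          ⟨a/6, a%6, by omega, by omega⟩
        unfold Ncl
        interval_cases r <;> split_ifs <;> omega
      have hN' : (Ncl (a-2) : ℚ) + Ncl (a-6) = Ncl a + Ncl (a-8) := by exact_mod_cast hN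
      unfold Pq
      rw [Nat.cast_sub (show 2 ≤ a by omega), Nat.cast_sub (show 3 ≤ a by omega),
        Nat.cast_sub (show 5 ≤ a by omega)]
      push_cast
      linarith
  by_cases hb2 : b = 2
  · subst hb2
    simp only [show (1:ℕ) ≤ 2 by omega, show (2:ℕ) ≤ 2 by omega,
      true_and, if_true, show (2:ℕ) ≠ 0 by omega, show (2:ℕ) ≠ 1 by omega,
      show (2:ℕ) - 1 = 1 from rfl, show (2:ℕ) - 2 = 0 from rfl, false_and, if_false,
      sub_zero, add_zero]
    rcases le_or_gt a 13 with h | h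
    · interval_cases a <;> norm_num [dimc_eval, Ncl, Pq]
    · simp only [show 2 ≤ a by omega, show 3 ≤ a by omega, show 5 ≤ a by omega,
        show 6 ≤ a by omega, show 8 ≤ a by omega, if_true,
        show a ≠ 9 by omega, if_false, add_zero]
      rw [dimc_min_y a 2 (by omega) (by omega), dimc_min_y (a-2) 2 (by omega) (by omega),
        dimc_min_y (a-3) 2 (by omega) (by omega), dimc_min_y (a-5) 2 (by omega) (by omega),
        dimc_min_y a 1 (by omega) (by omega), dimc_min_y (a-2) 1 (by omega) (by omega),
        dimc_min_y (a-6) 1 (by omega) (by omega), dimc_min_y (a-8) 1 (by omega) (by omega),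
        dimc_eval (a-3) 0, dimc_eval (a-5) 0, dimc_eval (a-6) 0, dimc_eval (a-8) 0,
        if_pos (Or.inr rfl), if_pos (Or.inr rfl), if_pos (Or.inr rfl), if_pos (Or.inr rfl)]
      have hN : Ncl (a-3) + Ncl (a-8) = Ncl (a-5) + Ncl (a-6) := by
        obtain ⟨q, r, hr, rfl⟩ : ∃ q r, r < 6 ∧ a = 6*q+r :=
          ⟨a/6, a%6, by omega, by omega⟩
        unfold Ncl
        interval_cases r <;> split_ifs <;> omega
      have hN' : (Ncl (a-3) : ℚ) + Ncl (a-8) = Ncl (a-5) + Ncl (a-6) := by exact_mod_cast hN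
      unfold Pq
      rw [Nat.cast_sub (show 2 ≤ a by omega), Nat.cast_sub (show 3 ≤ a by omega),
        Nat.cast_sub (show 5 ≤ a by omega), Nat.cast_sub (show 6 ≤ a by omega),
        Nat.cast_sub (show 8 ≤ a by omega)]
      push_cast
      linarith
  obtain ⟨c, rfl⟩ : ∃ c, b = c + 3 := ⟨b - 3, by omega⟩
  simp only [show (1:ℕ) ≤ c + 3 by omega, show (2:ℕ) ≤ c + 3 by omega, true_and, if_true,
    show c + 3 - 1 = c + 2 from rfl, show c + 3 - 2 = c + 1 from rfl,
    show c + 3 ≠ 0 by omega, show c + 3 ≠ 1 by omega, show c + 3 ≠ 2 by omega,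
    false_and, if_false, add_zero]
  by_cases hlt : a < 3 * (c + 3)
  · -- pairing region: everything cancels via dimc_step
    have e0 : dimc a (c+3) = dimc a (c+2) := dimc_step a (c+3) (by omega) (by omega)
    have e2 : dimc (a-2) (c+3) = dimc (a-2) (c+2) := dimc_step (a-2) (c+3) (by omega) (by omega)
    have e3 : dimc (a-3) (c+3) = dimc (a-3) (c+1) :=
      (dimc_step (a-3) (c+3) (by omega) (by omega)).trans
        (dimc_step (a-3) (c+2) (by omega) (by omega))
    have e5 : dimc (a-5) (c+3) = dimc (a-5) (c+1) :=
      (dimc_step (a-5) (c+3) (by omega) (by omega)).trans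
        (dimc_step (a-5) (c+2) (by omega) (by omega))
    have e6 : dimc (a-6) (c+2) = dimc (a-6) (c+1) := dimc_step (a-6) (c+2) (by omega) (by omega)
    have e8 : dimc (a-8) (c+2) = dimc (a-8) (c+1) := dimc_step (a-8) (c+2) (by omega) (by omega)
    rw [e0, e2, e3, e5, e6, e8]
    ring
  · push_neg at hlt
    simp only [show 2 ≤ a by omega, show 3 ≤ a by omega, show 5 ≤ a by omega,
      show 6 ≤ a by omega, show 8 ≤ a by omega, if_true]
    by_cases hbig : 3 * (c + 3) + 5 ≤ a
    · rw [dimc_min_y a (c+3) (by omega) (by omega),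
        dimc_min_y (a-2) (c+3) (by omega) (by omega),
        dimc_min_y (a-3) (c+3) (by omega) (by omega),
        dimc_min_y (a-5) (c+3) (by omega) (by omega),
        dimc_min_y a (c+2) (by omega) (by omega),
        dimc_min_y (a-2) (c+2) (by omega) (by omega),
        dimc_min_y (a-6) (c+2) (by omega) (by omega),
        dimc_min_y (a-8) (c+2) (by omega) (by omega),
        dimc_min_y (a-3) (c+1) (by omega) (by omega),
        dimc_min_y (a-5) (c+1) (by omega) (by omega),
        dimc_min_y (a-6) (c+1) (by omega) (by omega),
        dimc_min_y (a-8) (c+1) (by omega) (by omega)]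
      unfold Pq
      rw [Nat.cast_sub (show 2 ≤ a by omega), Nat.cast_sub (show 3 ≤ a by omega),
        Nat.cast_sub (show 5 ≤ a by omega), Nat.cast_sub (show 6 ≤ a by omega),
        Nat.cast_sub (show 8 ≤ a by omega)]
      push_cast; ring
    · push_neg at hbig
      by_cases hc0 : c = 0
      · subst hc0
        interval_cases a <;> norm_num [dimc_eval, Ncl, Pq]
      · have hc : 1 ≤ c := by omega
        obtain ⟨d, rfl⟩ : ∃ d, a = 3 * (c + 3) + d := ⟨a - 3 * (c + 3), by omega⟩
        have hd : d = 0 ∨ d = 1 ∨ d = 2 ∨ d = 3 ∨ d = 4 := by omega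
        rcases hd with rfl | rfl | rfl | rfl | rfl
        · -- d = 0
          rw [dimc_min_y (3*(c+3)+0) (c+3) (by omega) (by omega),
            dimc_clamp (3*(c+3)+0-2) (c+3) (c+2) (by omega) (by omega) (by omega) (by omega),
            dimc_clamp (3*(c+3)+0-3) (c+3) (c+2) (by omega) (by omega) (by omega) (by omega),
            dimc_clamp (3*(c+3)+0-5) (c+3) (c+1) (by omega) (by omega) (by omega) (by omega),
            dimc_min_y (3*(c+3)+0) (c+2) (by omega) (by omega),
            dimc_min_y (3*(c+3)+0-2) (c+2) (by omega) (by omega),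
            dimc_clamp (3*(c+3)+0-6) (c+2) (c+1) (by omega) (by omega) (by omega) (by omega),
            dimc_clamp (3*(c+3)+0-8) (c+2) (c) (by omega) (by omega) (by omega) (by omega),
            dimc_min_y (3*(c+3)+0-3) (c+1) (by omega) (by omega),
            dimc_min_y (3*(c+3)+0-5) (c+1) (by omega) (by omega),
            dimc_min_y (3*(c+3)+0-6) (c+1) (by omega) (by omega),
            dimc_clamp (3*(c+3)+0-8) (c+1) (c) (by omega) (by omega) (by omega) (by omega)]
          unfold Pq
          rw [Nat.cast_sub (by omega : 2 ≤ 3*(c+3)+0), Nat.cast_sub (by omega : 3 ≤ 3*(c+3)+0), Nat.cast_sub (by omega : 5 ≤ 3*(c+3)+0), Nat.cast_sub (by omega : 6 ≤ 3*(c+3)+0), Nat.cast_sub (by omega : 8 ≤ 3*(c+3)+0)]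
          push_cast; ring
        · -- d = 1
          rw [dimc_min_y (3*(c+3)+1) (c+3) (by omega) (by omega),
            dimc_clamp (3*(c+3)+1-2) (c+3) (c+2) (by omega) (by omega) (by omega) (by omega),
            dimc_clamp (3*(c+3)+1-3) (c+3) (c+2) (by omega) (by omega) (by omega) (by omega),
            dimc_clamp (3*(c+3)+1-5) (c+3) (c+1) (by omega) (by omega) (by omega) (by omega),
            dimc_min_y (3*(c+3)+1) (c+2) (by omega) (by omega),
            dimc_min_y (3*(c+3)+1-2) (c+2) (by omega) (by omega),
            dimc_clamp (3*(c+3)+1-6) (c+2) (c+1) (by omega) (by omega) (by omega) (by omega),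
            dimc_clamp (3*(c+3)+1-8) (c+2) (c) (by omega) (by omega) (by omega) (by omega),
            dimc_min_y (3*(c+3)+1-3) (c+1) (by omega) (by omega),
            dimc_min_y (3*(c+3)+1-5) (c+1) (by omega) (by omega),
            dimc_min_y (3*(c+3)+1-6) (c+1) (by omega) (by omega),
            dimc_clamp (3*(c+3)+1-8) (c+1) (c) (by omega) (by omega) (by omega) (by omega)]
          unfold Pq
          rw [Nat.cast_sub (by omega : 2 ≤ 3*(c+3)+1), Nat.cast_sub (by omega : 3 ≤ 3*(c+3)+1), Nat.cast_sub (by omega : 5 ≤ 3*(c+3)+1), Nat.cast_sub (by omega : 6 ≤ 3*(c+3)+1), Nat.cast_sub (by omega : 8 ≤ 3*(c+3)+1)]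
          push_cast; ring
        · -- d = 2
          rw [dimc_min_y (3*(c+3)+2) (c+3) (by omega) (by omega),
            dimc_min_y (3*(c+3)+2-2) (c+3) (by omega) (by omega),
            dimc_clamp (3*(c+3)+2-3) (c+3) (c+2) (by omega) (by omega) (by omega) (by omega),
            dimc_clamp (3*(c+3)+2-5) (c+3) (c+2) (by omega) (by omega) (by omega) (by omega),
            dimc_min_y (3*(c+3)+2) (c+2) (by omega) (by omega),
            dimc_min_y (3*(c+3)+2-2) (c+2) (by omega) (by omega),
            dimc_clamp (3*(c+3)+2-6) (c+2) (c+1) (by omega) (by omega) (by omega) (by omega),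
            dimc_clamp (3*(c+3)+2-8) (c+2) (c+1) (by omega) (by omega) (by omega) (by omega),
            dimc_min_y (3*(c+3)+2-3) (c+1) (by omega) (by omega),
            dimc_min_y (3*(c+3)+2-5) (c+1) (by omega) (by omega),
            dimc_min_y (3*(c+3)+2-6) (c+1) (by omega) (by omega),
            dimc_min_y (3*(c+3)+2-8) (c+1) (by omega) (by omega)]
          unfold Pq
          rw [Nat.cast_sub (by omega : 2 ≤ 3*(c+3)+2), Nat.cast_sub (by omega : 3 ≤ 3*(c+3)+2), Nat.cast_sub (by omega : 5 ≤ 3*(c+3)+2), Nat.cast_sub (by omega : 6 ≤ 3*(c+3)+2), Nat.cast_sub (by omega : 8 ≤ 3*(c+3)+2)]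
          push_cast; ring
        · -- d = 3
          rw [dimc_min_y (3*(c+3)+3) (c+3) (by omega) (by omega),
            dimc_min_y (3*(c+3)+3-2) (c+3) (by omega) (by omega),
            dimc_min_y (3*(c+3)+3-3) (c+3) (by omega) (by omega),
            dimc_clamp (3*(c+3)+3-5) (c+3) (c+2) (by omega) (by omega) (by omega) (by omega),
            dimc_min_y (3*(c+3)+3) (c+2) (by omega) (by omega),
            dimc_min_y (3*(c+3)+3-2) (c+2) (by omega) (by omega),
            dimc_min_y (3*(c+3)+3-6) (c+2) (by omega) (by omega),
            dimc_clamp (3*(c+3)+3-8) (c+2) (c+1) (by omega) (by omega) (by omega) (by omega),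
            dimc_min_y (3*(c+3)+3-3) (c+1) (by omega) (by omega),
            dimc_min_y (3*(c+3)+3-5) (c+1) (by omega) (by omega),
            dimc_min_y (3*(c+3)+3-6) (c+1) (by omega) (by omega),
            dimc_min_y (3*(c+3)+3-8) (c+1) (by omega) (by omega)]
          unfold Pq
          rw [Nat.cast_sub (by omega : 2 ≤ 3*(c+3)+3), Nat.cast_sub (by omega : 3 ≤ 3*(c+3)+3), Nat.cast_sub (by omega : 5 ≤ 3*(c+3)+3), Nat.cast_sub (by omega : 6 ≤ 3*(c+3)+3), Nat.cast_sub (by omega : 8 ≤ 3*(c+3)+3)]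
          push_cast; ring
        · -- d = 4
          rw [dimc_min_y (3*(c+3)+4) (c+3) (by omega) (by omega),
            dimc_min_y (3*(c+3)+4-2) (c+3) (by omega) (by omega),
            dimc_min_y (3*(c+3)+4-3) (c+3) (by omega) (by omega),
            dimc_clamp (3*(c+3)+4-5) (c+3) (c+2) (by omega) (by omega) (by omega) (by omega),
            dimc_min_y (3*(c+3)+4) (c+2) (by omega) (by omega),
            dimc_min_y (3*(c+3)+4-2) (c+2) (by omega) (by omega),
            dimc_min_y (3*(c+3)+4-6) (c+2) (by omega) (by omega),
            dimc_clamp (3*(c+3)+4-8) (c+2) (c+1) (by omega) (by omega) (by omega) (by omega),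
            dimc_min_y (3*(c+3)+4-3) (c+1) (by omega) (by omega),
            dimc_min_y (3*(c+3)+4-5) (c+1) (by omega) (by omega),
            dimc_min_y (3*(c+3)+4-6) (c+1) (by omega) (by omega),
            dimc_min_y (3*(c+3)+4-8) (c+1) (by omega) (by omega)]
          unfold Pq
          rw [Nat.cast_sub (by omega : 2 ≤ 3*(c+3)+4), Nat.cast_sub (by omega : 3 ≤ 3*(c+3)+4), Nat.cast_sub (by omega : 5 ≤ 3*(c+3)+4), Nat.cast_sub (by omega : 6 ≤ 3*(c+3)+4), Nat.cast_sub (by omega : 8 ≤ 3*(c+3)+4)]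
          push_cast; ring


open Finsupp in
lemma pair_le (e : Fin 2 →₀ ℕ) (i j : ℕ) :
    (single (0 : Fin 2) i + single 1 j) ≤ e ↔ i ≤ e 0 ∧ j ≤ e 1 := by
  rw [Finsupp.le_def, Fin.forall_fin_two]
  simp [Finsupp.single_apply]

open Finsupp in
lemma pair_eq (e : Fin 2 →₀ ℕ) (p q : ℕ) :
    e = single (0 : Fin 2) p + single 1 q ↔ e 0 = p ∧ e 1 = q := by
  rw [Finsupp.ext_iff, Fin.forall_fin_two]
  simp [Finsupp.single_apply]

open MvPowerSeries Finsupp in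
lemma coeff_term (e : Fin 2 →₀ ℕ) (i j : ℕ) :
    coeff e (dimSeries * (X 0 ^ i * X 1 ^ j)) =
      if i ≤ e 0 ∧ j ≤ e 1 then dimc (e 1 - j) (e 0 - i) else 0 := by
  rw [X_pow_eq, X_pow_eq, monomial_mul_monomial, one_mul, coeff_mul_monomial]
  simp only [mul_one, pair_le]
  split_ifs with h
  · have hc : ∀ d : Fin 2 →₀ ℕ, coeff d dimSeries = dimc (d 1) (d 0) := fun _ => rfl
    rw [hc, Finsupp.tsub_apply, Finsupp.tsub_apply]
    simp [Finsupp.single_apply]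
  · rfl

open MvPowerSeries Finsupp

open MvPowerSeries in
theorem stmt_3 :
    dimSeries * (1 - (X 1 : MvPowerSeries (Fin 2) ℚ) ^ 2) * (1 - X 1 ^ 3)
        * (1 - X 0) * (1 - X 0 * X 1 ^ 3)
      = 1 + 2 * X 0 * X 1 ^ 4 + 2 * X 0 * X 1 ^ 5 + X 0 ^ 2 * X 1 ^ 9 := by
  have hexp : dimSeries * (1 - (X 1 : MvPowerSeries (Fin 2) ℚ) ^ 2) * (1 - X 1 ^ 3)
        * (1 - X 0) * (1 - X 0 * X 1 ^ 3)
      = dimSeries * (X 0 ^ 0 * X 1 ^ 0) - dimSeries * (X 0 ^ 0 * X 1 ^ 2)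
        - dimSeries * (X 0 ^ 0 * X 1 ^ 3) + dimSeries * (X 0 ^ 0 * X 1 ^ 5)
        - dimSeries * (X 0 ^ 1 * X 1 ^ 0) + dimSeries * (X 0 ^ 1 * X 1 ^ 2)
        + dimSeries * (X 0 ^ 1 * X 1 ^ 6) - dimSeries * (X 0 ^ 1 * X 1 ^ 8)
        + dimSeries * (X 0 ^ 2 * X 1 ^ 3) - dimSeries * (X 0 ^ 2 * X 1 ^ 5)
        - dimSeries * (X 0 ^ 2 * X 1 ^ 6) + dimSeries * (X 0 ^ 2 * X 1 ^ 8) := by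
    ring
  have hone : (1 : MvPowerSeries (Fin 2) ℚ)
      = monomial (single (0:Fin 2) 0 + single 1 0) 1 := by
    rw [Finsupp.single_zero, Finsupp.single_zero, add_zero, monomial_zero_one]
  have hm1 : 2 * (X 0 : MvPowerSeries (Fin 2) ℚ) * X 1 ^ 4
      = monomial (single (0:Fin 2) 1 + single 1 4) 2 := by
    have : (X 0 : MvPowerSeries (Fin 2) ℚ) * X 1 ^ 4
        = monomial (single (0:Fin 2) 1 + single 1 4) 1 := by
      rw [show (X 0 : MvPowerSeries (Fin 2) ℚ) = X 0 ^ 1 by ring, X_pow_eq, X_pow_eq,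
        monomial_mul_monomial, one_mul]
    rw [mul_assoc, this, two_mul, ← map_add]
    norm_num
  have hm2 : 2 * (X 0 : MvPowerSeries (Fin 2) ℚ) * X 1 ^ 5
      = monomial (single (0:Fin 2) 1 + single 1 5) 2 := by
    have : (X 0 : MvPowerSeries (Fin 2) ℚ) * X 1 ^ 5
        = monomial (single (0:Fin 2) 1 + single 1 5) 1 := by
      rw [show (X 0 : MvPowerSeries (Fin 2) ℚ) = X 0 ^ 1 by ring, X_pow_eq, X_pow_eq,
        monomial_mul_monomial, one_mul]
    rw [mul_assoc, this, two_mul, ← map_add]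
    norm_num
  have hm3 : (X 0 : MvPowerSeries (Fin 2) ℚ) ^ 2 * X 1 ^ 9
      = monomial (single (0:Fin 2) 2 + single 1 9) 1 := by
    rw [X_pow_eq, X_pow_eq, monomial_mul_monomial, one_mul]
  rw [hexp]
  conv_rhs => rw [hone, hm1, hm2, hm3]
  ext e
  simp only [map_add, map_sub, coeff_term, coeff_monomial, pair_eq]
  simp only [Nat.zero_le, true_and, and_true, if_true, Nat.sub_zero]
  exact key (e 0) (e 1)
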